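/- Min-entropy trace bound: let ρ be a d × d positive semidefinite matrix with Tr{ρ} ≤ 1 and ρ ≤ λ·I in the Loewner order for some λ ≥ 0, and let A, B be Hermitian d × d matrices with 0 ≤ A ≤ I and 0 ≤ B ≤ I. Then Tr{ρ A B ρ B A} ≤ λ. -/

import Mathlib

open scoped ComplexOrder

noncomputable section

open Matrix
open scoped MatrixOrder

lemma psd_trace_nonneg {d : ℕ} {M : Matrix (Fin d) (Fin d) ℂ}
    (hM : M.PosSemidef) : 0 ≤ M.trace := by
  rw [Matrix.trace]
  apply Finset.sum_nonneg
  intro i _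
  have := hM.diag_nonneg (i := i)
  simpa [dotProduct, Pi.single_apply, Matrix.mulVec] using this

lemma psd_trace_mul_nonneg {d : ℕ} {P Q : Matrix (Fin d) (Fin d) ℂ}
    (hP : P.PosSemidef) (hQ : Q.PosSemidef) : 0 ≤ (P * Q).trace := by
  have h1 : P * Q = CFC.sqrt P * CFC.sqrt P * Q := by rw [CFC.sqrt_mul_sqrt_self P hP.nonneg]
  rw [h1, ← Matrix.trace_mul_cycle]
  have h2 : (CFC.sqrt P * Q * (CFC.sqrt P)ᴴ).PosSemidef :=
    hQ.mul_mul_conjTranspose_same (CFC.sqrt P)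
  rw [(CFC.sqrt_nonneg P).posSemidef.1.eq] at h2
  exact psd_trace_nonneg h2

lemma psd_sq_le {d : ℕ} {A : Matrix (Fin d) (Fin d) ℂ}
    (hA : A.PosSemidef) (hAI : (1 - A).PosSemidef) :
    (1 - A * A).PosSemidef := by
  obtain ⟨s, hherm, rfl⟩ : ∃ s : Matrix (Fin d) (Fin d) ℂ,
      s.IsHermitian ∧ s * s = A :=
    ⟨CFC.sqrt A, (CFC.sqrt_nonneg A).posSemidef.1, CFC.sqrt_mul_sqrt_self A hA.nonneg⟩
  have h1 : (s * (1 - s * s) * sᴴ).PosSemidef :=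
    hAI.mul_mul_conjTranspose_same s
  rw [hherm.eq] at h1
  have h2 : s * (1 - s * s) * s = s * s - s * s * (s * s) := by noncomm_ring
  rw [h2] at h1
  have h3 : (1 : Matrix (Fin d) (Fin d) ℂ) - s * s * (s * s)
      = (1 - s * s) + (s * s - s * s * (s * s)) := by noncomm_ring
  rw [h3]
  exact hAI.add h1

/-- **Min-entropy trace bound**: if `ρ ≥ 0`, `Tr ρ ≤ 1`, `ρ ≤ λ·I`, and
`0 ≤ A ≤ I`, `0 ≤ B ≤ I` are Hermitian, then `Tr{ρ A B ρ B A} ≤ λ`. -/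
theorem min_entropy_trace_bound {d : ℕ}
    (ρ A B : Matrix (Fin d) (Fin d) ℂ) (lam : ℝ) (hlam : 0 ≤ lam)
    (hρ : ρ.PosSemidef) (hρtr : (ρ.trace).re ≤ 1)
    (hρle : ((lam : ℂ) • (1 : Matrix (Fin d) (Fin d) ℂ) - ρ).PosSemidef)
    (hA : A.PosSemidef) (hAI : (1 - A).PosSemidef)
    (hB : B.PosSemidef) (hBI : (1 - B).PosSemidef) :
    ((ρ * A * B * ρ * B * A).trace).re ≤ lam := by
  -- X = (A B) ρ (A B)ᴴ = A B ρ B A is PSD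
  have hXpsd : (A * B * ρ * (B * A)).PosSemidef := by
    have := hρ.mul_mul_conjTranspose_same (A * B)
    rwa [Matrix.conjTranspose_mul, hA.1.eq, hB.1.eq] at this
  set X := A * B * ρ * (B * A) with hX
  -- main trace equals Tr (ρ * X)
  have htr_eq : (ρ * A * B * ρ * B * A).trace = (ρ * X).trace := by
    rw [hX]
    congr 1
    noncomm_ring
  -- Tr (ρ X) ≤ λ • Tr X
  have h1 : (ρ * X).trace ≤ (lam : ℂ) * X.trace := by
    have h0 : 0 ≤ ((((lam : ℂ) • (1 : Matrix (Fin d) (Fin d) ℂ)) - ρ) * X).trace :=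
      psd_trace_mul_nonneg hρle hXpsd
    rw [Matrix.sub_mul, Matrix.trace_sub, Matrix.smul_mul, Matrix.one_mul,
      Matrix.trace_smul] at h0
    have := sub_nonneg.mp h0
    simpa [smul_eq_mul] using this
  -- Tr X = Tr (ρ * C) with C = B A A B
  have h2 : X.trace = (ρ * (B * (A * A) * B)).trace := by
    rw [hX]
    rw [Matrix.trace_mul_comm]
    rw [show B * A * (A * B * ρ) = (B * A * (A * B)) * ρ by noncomm_ring]
    rw [Matrix.trace_mul_comm]
    congr 1
    noncomm_ring
  -- 1 - B A² B is PSD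
  have hC : ((1 : Matrix (Fin d) (Fin d) ℂ) - B * (A * A) * B).PosSemidef := by
    have hA2 : (1 - A * A).PosSemidef := psd_sq_le hA hAI
    have hB2 : (1 - B * B).PosSemidef := psd_sq_le hB hBI
    have hconj : (B * (1 - A * A) * B).PosSemidef := by
      have := hA2.mul_mul_conjTranspose_same B
      rwa [hB.1.eq] at this
    have heq : (1 : Matrix (Fin d) (Fin d) ℂ) - B * (A * A) * B
        = B * (1 - A * A) * B + (1 - B * B) := by noncomm_ring
    rw [heq]
    exact hconj.add hB2
  -- Tr (ρ C) ≤ Tr ρ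
  have h3 : (ρ * (B * (A * A) * B)).trace ≤ ρ.trace := by
    have h0 : 0 ≤ (ρ * ((1 : Matrix (Fin d) (Fin d) ℂ) - B * (A * A) * B)).trace :=
      psd_trace_mul_nonneg hρ hC
    rw [Matrix.mul_sub, Matrix.trace_sub, Matrix.mul_one] at h0
    exact sub_nonneg.mp h0
  -- Tr ρ ≤ 1 in ℂ
  have hρ1 : ρ.trace ≤ 1 := by
    have h0 : 0 ≤ ρ.trace := psd_trace_nonneg hρ
    rw [Complex.le_def] at h0 ⊢
    simp only [Complex.zero_re, Complex.zero_im, Complex.one_re, Complex.one_im] at *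
    exact ⟨hρtr, h0.2.symm⟩
  -- combine
  have hfin : (ρ * A * B * ρ * B * A).trace ≤ (lam : ℂ) := by
    calc (ρ * A * B * ρ * B * A).trace = (ρ * X).trace := htr_eq
      _ ≤ (lam : ℂ) * X.trace := h1
      _ = (lam : ℂ) * (ρ * (B * (A * A) * B)).trace := by rw [h2]
      _ ≤ (lam : ℂ) * 1 := by
          apply mul_le_mul_of_nonneg_left (le_trans h3 hρ1)
          exact_mod_cast hlam
      _ = (lam : ℂ) := mul_one _
  have := (Complex.le_def.mp hfin).1
  simpa using this
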